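/- arXiv:1102.0431 — 3 statements merged into one kernel-verified Lean document; each statement's English description precedes it below -/
import Mathlib

section
/- Let X be a compact metric space with a continuous flow φ, and f: X → ℝ continuous. Suppose ∫ f dμ > 0 for every φ-invariant Borel probability measure μ on X. Then there exists T > 0 such that the time-T average f_T(x) = (1/T) ∫₀ᵀ f(φ_s(x)) ds is strictly positive for all x ∈ X. -/
open MeasureTheory

open MeasureTheory Set TopologicalSpace
open scoped ENNReal NNReal
set_option linter.unusedSectionVars false
set_option maxHeartbeats 1000000

namespace TimeAvgAux


theorem step_sum {c : ℝ} (hc : 0 < c) {y : ℝ} (hy : 0 ≤ y) (n : ℕ) :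
    ∑ i ∈ Finset.range n, min c (max 0 (y - i * c)) = min ((n : ℝ) * c) y := by
  induction n with
  | zero => simp [min_eq_left hy]
  | succ n ih =>
    rw [Finset.sum_range_succ, ih]
    push_cast
    rcases le_total y ((n : ℝ) * c) with h | h
    · have h2 : y - n * c ≤ 0 := by linarith
      have h3 : y ≤ ((n : ℝ) + 1) * c := by nlinarith
      rw [max_eq_left h2, min_eq_right hc.le, min_eq_right h, min_eq_right h3, add_zero]
    · have h2 : (0:ℝ) ≤ y - n * c := by linarith
      rw [max_eq_right h2, min_eq_left h]
      rcases le_total y (((n : ℝ) + 1) * c) with h3 | h3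
      · have : y - n * c ≤ c := by nlinarith
        rw [min_eq_right this, min_eq_right h3]
        ring
      · have : c ≤ y - n * c := by nlinarith
        rw [min_eq_left this, min_eq_left h3]
        ring

theorem clamp_mul {c : ℝ} (hc : 0 < c) (t : ℝ) :
    c * min 1 (max 0 (t / c)) = min c (max 0 t) := by
  rw [mul_min_of_nonneg _ _ hc.le, mul_one, mul_max_of_nonneg _ _ hc.le, mul_zero,
    mul_div_cancel₀ _ hc.ne']


variable {X : Type*} [MetricSpace X] [CompactSpace X]

structure IsPosFunctional (α : C(X, ℝ) → ℝ) : Prop where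
  add : ∀ g h : C(X, ℝ), α (g + h) = α g + α h
  smul : ∀ (c : ℝ) (g : C(X, ℝ)), α (c • g) = c * α g
  mono : ∀ g h : C(X, ℝ), (∀ x, g x ≤ h x) → α g ≤ α h
  one : α 1 = 1

namespace IsPosFunctional
variable {α : C(X, ℝ) → ℝ} (hα : IsPosFunctional α)
include hα

theorem zero : α 0 = 0 := by
  have := hα.smul 0 0
  simpa using this

theorem nonneg {g : C(X, ℝ)} (hg : ∀ x, 0 ≤ g x) : 0 ≤ α g := by
  have := hα.mono 0 g (by simpa using hg)
  rwa [hα.zero] at this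

theorem finsetSum {ι : Type*} (s : Finset ι) (ψ : ι → C(X, ℝ)) :
    α (∑ i ∈ s, ψ i) = ∑ i ∈ s, α (ψ i) := by
  classical
  induction s using Finset.induction_on with
  | empty => simpa using hα.zero
  | insert _ _ hnot ih => rw [Finset.sum_insert hnot, Finset.sum_insert hnot, hα.add, ih]

end IsPosFunctional

def testSet (K : Set X) : Set C(X, ℝ) :=
  {g | (∀ x, 0 ≤ g x) ∧ ∀ x ∈ K, 1 ≤ g x}

theorem one_mem_testSet (K : Set X) : (1 : C(X, ℝ)) ∈ testSet K :=
  ⟨fun _ => zero_le_one, fun _ _ => le_refl _⟩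

noncomputable def preContent (α : C(X, ℝ) → ℝ) (K : Set X) : ℝ :=
  sInf (α '' testSet K)

variable {α : C(X, ℝ) → ℝ} (hα : IsPosFunctional α)

theorem preContent_nonempty (K : Set X) : (α '' testSet K).Nonempty :=
  ⟨α 1, 1, one_mem_testSet K, rfl⟩

include hα

theorem preContent_bddBelow (K : Set X) : BddBelow (α '' testSet K) := by
  refine ⟨0, ?_⟩
  rintro - ⟨g, hg, rfl⟩
  exact hα.nonneg hg.1

theorem preContent_nonneg (K : Set X) : 0 ≤ preContent α K :=
  le_csInf (preContent_nonempty K) (by rintro - ⟨g, hg, rfl⟩; exact hα.nonneg hg.1)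

theorem preContent_le {K : Set X} {g : C(X, ℝ)} (hg : g ∈ testSet K) :
    preContent α K ≤ α g :=
  csInf_le (preContent_bddBelow hα K) ⟨g, hg, rfl⟩

theorem preContent_mono {K₁ K₂ : Set X} (h : K₁ ⊆ K₂) :
    preContent α K₁ ≤ preContent α K₂ := by
  apply le_csInf (preContent_nonempty K₂)
  rintro - ⟨g, hg, rfl⟩
  exact preContent_le hα ⟨hg.1, fun x hx => hg.2 x (h hx)⟩

omit hα in
theorem exists_testSet_lt {K : Set X} {ε : ℝ} (hε : 0 < ε) :
    ∃ g ∈ testSet K, α g < preContent α K + ε := by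
  obtain ⟨-, ⟨g, hg, rfl⟩, hlt⟩ :=
    exists_lt_of_csInf_lt (preContent_nonempty (α := α) K)
      (lt_add_of_pos_right (preContent α K) hε)
  exact ⟨g, hg, hlt⟩

theorem preContent_union_le (K₁ K₂ : Set X) :
    preContent α (K₁ ∪ K₂) ≤ preContent α K₁ + preContent α K₂ := by
  refine le_of_forall_pos_le_add fun ε hε => ?_
  obtain ⟨g₁, hg₁, hlt₁⟩ := exists_testSet_lt (α := α) (K := K₁) (half_pos hε)
  obtain ⟨g₂, hg₂, hlt₂⟩ := exists_testSet_lt (α := α) (K := K₂) (half_pos hε)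
  have hmem : g₁ + g₂ ∈ testSet (K₁ ∪ K₂) := by
    constructor
    · intro x
      simpa using add_nonneg (hg₁.1 x) (hg₂.1 x)
    · rintro x (hx | hx)
      · simpa using le_add_of_le_of_nonneg (hg₁.2 x hx) (hg₂.1 x)
      · simpa using le_add_of_nonneg_of_le (hg₁.1 x) (hg₂.2 x hx)
  calc preContent α (K₁ ∪ K₂) ≤ α (g₁ + g₂) := preContent_le hα hmem
    _ = α g₁ + α g₂ := hα.add _ _
    _ ≤ _ := by linarith

theorem add_preContent_le_of_disjoint {K₁ K₂ : Set X} (hd : Disjoint K₁ K₂)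
    (h₁ : IsClosed K₁) (h₂ : IsClosed K₂) :
    preContent α K₁ + preContent α K₂ ≤ preContent α (K₁ ∪ K₂) := by
  apply le_csInf (preContent_nonempty (K₁ ∪ K₂))
  rintro - ⟨g, hg, rfl⟩
  obtain ⟨u, hu0, hu1, hu01⟩ := exists_continuous_zero_one_of_isClosed h₂ h₁ hd.symm
  have hmem₁ : g * u ∈ testSet K₁ := by
    constructor
    · intro x
      exact mul_nonneg (hg.1 x) (hu01 x).1
    · intro x hx
      have hux : u x = 1 := hu1 hx
      simp only [ContinuousMap.mul_apply, hux, mul_one]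
      exact hg.2 x (Or.inl hx)
  have hmem₂ : g * (1 - u) ∈ testSet K₂ := by
    constructor
    · intro x
      exact mul_nonneg (hg.1 x) (by simpa using (hu01 x).2)
    · intro x hx
      have hux : u x = 0 := hu0 hx
      simp only [ContinuousMap.mul_apply, ContinuousMap.sub_apply,
        ContinuousMap.one_apply, hux, sub_zero, mul_one]
      exact hg.2 x (Or.inr hx)
  have hsum : g * u + g * (1 - u) = g := by
    ext x
    simp only [ContinuousMap.add_apply, ContinuousMap.mul_apply, ContinuousMap.sub_apply,
      ContinuousMap.one_apply]
    ring
  calc preContent α K₁ + preContent α K₂ ≤ α (g * u) + α (g * (1 - u)) :=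
        add_le_add (preContent_le hα hmem₁) (preContent_le hα hmem₂)
    _ = α (g * u + g * (1 - u)) := (hα.add _ _).symm
    _ = α g := by rw [hsum]

theorem preContent_univ : preContent α (univ : Set X) = 1 := by
  apply le_antisymm
  · have := preContent_le hα (one_mem_testSet (univ : Set X))
    rwa [hα.one] at this
  · apply le_csInf (preContent_nonempty univ)
    rintro - ⟨g, hg, rfl⟩
    have := hα.mono 1 g fun x => by simpa using hg.2 x (mem_univ x)
    rwa [hα.one] at this

noncomputable def rieszContent (hα : IsPosFunctional α) : Content X where
  toFun K := Real.toNNReal (preContent α K)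
  mono' K₁ K₂ h := Real.toNNReal_mono (preContent_mono hα h)
  sup_disjoint' K₁ K₂ hd hc₁ hc₂ := by
    have h1 : preContent α (↑(K₁ ⊔ K₂) : Set X) = preContent α K₁ + preContent α K₂ := by
      refine le_antisymm ?_ ?_
      · simpa using preContent_union_le hα (K₁ : Set X) K₂
      · simpa using add_preContent_le_of_disjoint hα hd hc₁ hc₂
    simp only [h1]
    rw [Real.toNNReal_add (preContent_nonneg hα _) (preContent_nonneg hα _)]
  sup_le' K₁ K₂ := by
    have := preContent_union_le hα (K₁ : Set X) K₂
    calc Real.toNNReal (preContent α (↑(K₁ ⊔ K₂) : Set X))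
        ≤ Real.toNNReal (preContent α K₁ + preContent α K₂) := by
          apply Real.toNNReal_mono; simpa using this
      _ ≤ _ := Real.toNNReal_add_le

variable [MeasurableSpace X] [BorelSpace X]

theorem rieszContent_apply (K : Compacts X) :
    (rieszContent hα) K = (Real.toNNReal (preContent α K) : ℝ≥0∞) := rfl

/-- The Riesz measure is a probability measure. -/
theorem isProbability : IsProbabilityMeasure (rieszContent hα).measure := by
  constructor
  rw [Content.measure_apply _ MeasurableSet.univ,
    (rieszContent hα).outerMeasure_of_isOpen univ isOpen_univ]
  have h1 : (rieszContent hα).innerContent ⟨univ, isOpen_univ⟩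
      = (rieszContent hα) ⟨univ, isCompact_univ⟩ :=
    Content.innerContent_of_isCompact _ isCompact_univ isOpen_univ
  rw [h1, rieszContent_apply]
  rw [show ((⟨univ, isCompact_univ⟩ : Compacts X) : Set X) = univ from rfl]
  rw [preContent_univ hα]
  simp

/-- Key upper bound: the measure of a compact set is at most `α g` for any test function. -/
theorem measure_le_testSet {K : Set X} (hK : IsClosed K) {g : C(X, ℝ)}
    (hg : g ∈ testSet K) :
    (rieszContent hα).measure K ≤ ENNReal.ofReal (α g) := by
  have hαg : 0 ≤ α g := hα.nonneg hg.1
  rw [Content.measure_apply _ hK.measurableSet]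
  refine ENNReal.le_of_forall_pos_le_add fun ε hε _ => ?_
  set δ : ℝ := (ε : ℝ) / (2 * (α g + 1)) with hδdef
  have hδ0 : 0 < δ := by positivity
  set U : Set X := {x | 1 / (1 + δ) < g x} with hUdef
  have hUopen : IsOpen U := by
    have : U = g ⁻¹' Ioi (1 / (1 + δ)) := rfl
    rw [this]
    exact isOpen_Ioi.preimage g.continuous
  have hKU : K ⊆ U := by
    intro x hx
    have h1 : 1 ≤ g x := hg.2 x hx
    have : 1 / (1 + δ) < 1 := by
      rw [div_lt_one (by linarith)]
      linarith
    exact lt_of_lt_of_le this h1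
  have step1 : (rieszContent hα).outerMeasure K ≤ (rieszContent hα).outerMeasure U :=
    measure_mono hKU
  rw [(rieszContent hα).outerMeasure_of_isOpen U hUopen] at step1
  have step2 : (rieszContent hα).innerContent ⟨U, hUopen⟩
      ≤ ENNReal.ofReal ((1 + δ) * α g) := by
    refine iSup₂_le fun K' hK' => ?_
    rw [rieszContent_apply]
    have hmem : (1 + δ) • g ∈ testSet (K' : Set X) := by
      constructor
      · intro x
        simpa using mul_nonneg (by linarith : (0:ℝ) ≤ 1 + δ) (hg.1 x)
      · intro x hx
        have hgx : 1 / (1 + δ) < g x := hK' hx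
        have h1δ : (0:ℝ) < 1 + δ := by linarith
        simp only [ContinuousMap.smul_apply, smul_eq_mul]
        rw [div_lt_iff₀ h1δ] at hgx
        nlinarith
    have := (preContent_le hα hmem).trans_eq (hα.smul (1 + δ) g)
    calc (Real.toNNReal (preContent α (K' : Set X)) : ℝ≥0∞)
        = ENNReal.ofReal (preContent α (K' : Set X)) := rfl
      _ ≤ ENNReal.ofReal ((1 + δ) * α g) := ENNReal.ofReal_le_ofReal this
  refine step1.trans (step2.trans ?_)
  have : (1 + δ) * α g = α g + δ * α g := by ring
  rw [this]
  refine (ENNReal.ofReal_add_le).trans ?_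
  gcongr
  have hle : δ * α g ≤ (ε : ℝ) := by
    rw [hδdef]
    rw [div_mul_eq_mul_div, div_le_iff₀ (by positivity)]
    nlinarith [hαg, ε.coe_nonneg]
  calc ENNReal.ofReal (δ * α g) ≤ ENNReal.ofReal (ε : ℝ) := ENNReal.ofReal_le_ofReal hle
    _ = (ε : ℝ≥0∞) := ENNReal.ofReal_coe_nnreal


theorem integral_le_of_nonneg {g : C(X, ℝ)} (hg : ∀ x, 0 ≤ g x) :
    ∫ x, g x ∂(rieszContent hα).measure ≤ α g := by
  haveI hprob : IsProbabilityMeasure (rieszContent hα).measure := isProbability hα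
  set μ := (rieszContent hα).measure with hμdef
  set M : ℝ := ‖g‖ + 1 with hM
  have hM0 : 0 < M := by positivity
  have hgM : ∀ x, g x ≤ M := fun x =>
    (le_abs_self _).trans ((g.norm_coe_le_norm x).trans (by simp [hM]))
  have key : ∀ n : ℕ, 1 ≤ n → ∫ x, g x ∂μ ≤ M / n + α g := by
    intro n hn
    have hn0 : (0:ℝ) < n := by exact_mod_cast hn
    set c : ℝ := M / n with hc
    have hc0 : 0 < c := by positivity
    -- the staircase functions
    set ψ : ℕ → C(X, ℝ) := fun i =>
      ⟨fun x => min 1 (max 0 ((g x - i * c) / c)),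
        (continuous_const.min (continuous_const.max
          ((g.continuous.sub continuous_const).div_const c)))⟩ with hψ
    have hψ_apply : ∀ i x, ψ i x = min 1 (max 0 ((g x - i * c) / c)) := fun i x => rfl
    have hψ01 : ∀ i x, 0 ≤ ψ i x ∧ ψ i x ≤ 1 := by
      intro i x
      rw [hψ_apply]
      constructor
      · exact le_min zero_le_one (le_max_left _ _)
      · exact min_le_left _ _
    -- the pointwise identity
    have hpt : ∀ x, g x = ∑ i ∈ Finset.range n, c * ψ i x := by
      intro x
      have h1 : ∀ i : ℕ, c * ψ i x = min c (max 0 (g x - i * c)) := fun i => by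
        rw [hψ_apply]; exact clamp_mul hc0 _
      calc g x = min ((n:ℝ) * c) (g x) := by
            rw [min_eq_right]
            rw [hc]
            field_simp
            exact hgM x
        _ = ∑ i ∈ Finset.range n, min c (max 0 (g x - i * c)) :=
            (step_sum hc0 (hg x) n).symm
        _ = ∑ i ∈ Finset.range n, c * ψ i x := by
            refine Finset.sum_congr rfl fun i _ => (h1 i).symm
    -- integrability
    have hint : ∀ h : C(X, ℝ), Integrable (fun x => h x) μ :=
      fun h => h.continuous.integrable_of_hasCompactSupport
        (HasCompactSupport.of_compactSpace _)
    -- superlevel set bound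
    have hbound : ∀ i : ℕ, ∫ x, ψ (i + 1) x ∂μ ≤ α (ψ i) := by
      intro i
      set S : Set X := g ⁻¹' Ici (((i:ℝ) + 1) * c) with hS
      have hSclosed : IsClosed S := isClosed_Ici.preimage g.continuous
      have hψS : ∀ x, ψ (i + 1) x ≤ S.indicator (fun _ => (1:ℝ)) x := by
        intro x
        by_cases hx : x ∈ S
        · rw [indicator_of_mem hx]
          exact (hψ01 _ x).2
        · rw [indicator_of_notMem hx]
          have hgx : g x < ((i:ℝ) + 1) * c := by
            simpa [hS, not_le] using hx
          rw [hψ_apply]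
          push_cast
          have hnp : (g x - ((i:ℝ)+1) * c) / c ≤ 0 := by
            apply div_nonpos_of_nonpos_of_nonneg _ hc0.le
            linarith
          rw [max_eq_left hnp]
          simp
      have hmem : ψ i ∈ testSet S := by
        refine ⟨fun x => (hψ01 _ x).1, fun x hx => ?_⟩
        have hgx : ((i:ℝ) + 1) * c ≤ g x := hx
        rw [hψ_apply]
        have h1 : (1:ℝ) ≤ (g x - i * c) / c := by
          rw [le_div_iff₀ hc0]
          nlinarith
        rw [max_eq_right (zero_le_one.trans h1), min_eq_left h1]
      have hμS : μ S ≤ ENNReal.ofReal (α (ψ i)) := measure_le_testSet hα hSclosed hmem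
      calc ∫ x, ψ (i + 1) x ∂μ ≤ ∫ x, S.indicator (fun _ => (1:ℝ)) x ∂μ := by
            refine integral_mono (hint _) ?_ hψS
            exact (integrable_const (1:ℝ)).indicator hSclosed.measurableSet
        _ = (μ S).toReal := by
            rw [integral_indicator_const _ hSclosed.measurableSet]
            simp
            rfl
        _ ≤ α (ψ i) := by
            have := ENNReal.toReal_mono (by simp) hμS
            rwa [ENNReal.toReal_ofReal (hα.nonneg fun x => (hψ01 i x).1)] at this
    have hψ0le : ∫ x, ψ 0 x ∂μ ≤ 1 := by
      calc ∫ x, ψ 0 x ∂μ ≤ ∫ _x, (1:ℝ) ∂μ :=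
            integral_mono (hint _) (integrable_const _) fun x => (hψ01 0 x).2
        _ = 1 := by simp
    -- assemble
    obtain ⟨m, rfl⟩ : ∃ m, n = m + 1 := ⟨n - 1, by omega⟩
    have hαsum : ∑ i ∈ Finset.range (m + 1), c * α (ψ i) = α g := by
      have : ∀ i ∈ Finset.range (m+1), c * α (ψ i) = α (c • ψ i) :=
        fun i _ => (hα.smul c (ψ i)).symm
      rw [Finset.sum_congr rfl this, ← hα.finsetSum]
      congr 1
      ext x
      have := hpt x
      simpa using this.symm
    have hsplit : ∫ x, g x ∂μ = ∑ i ∈ Finset.range (m+1), c * ∫ x, ψ i x ∂μ := by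
      have h1 : ∫ x, g x ∂μ = ∫ x, ∑ i ∈ Finset.range (m+1), c * ψ i x ∂μ := by
        apply integral_congr_ae
        filter_upwards with x using hpt x
      rw [h1, integral_finset_sum]
      · refine Finset.sum_congr rfl fun i _ => ?_
        simpa [smul_eq_mul] using integral_smul c (fun x => ψ i x) (μ := μ)
      · exact fun i _ => (hint (ψ i)).const_mul c
    rw [hsplit]
    rw [Finset.sum_range_succ']
    have hstep : ∑ i ∈ Finset.range m, c * ∫ x, ψ (i+1) x ∂μ + c * ∫ x, ψ 0 x ∂μ
        ≤ ∑ i ∈ Finset.range m, c * α (ψ i) + c := by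
      refine add_le_add (Finset.sum_le_sum fun i _ =>
        mul_le_mul_of_nonneg_left (hbound i) hc0.le) ?_
      calc c * ∫ x, ψ 0 x ∂μ ≤ c * 1 := mul_le_mul_of_nonneg_left hψ0le hc0.le
        _ = c := mul_one c
    refine hstep.trans ?_
    have hlast : ∑ i ∈ Finset.range m, c * α (ψ i) ≤ ∑ i ∈ Finset.range (m+1), c * α (ψ i) := by
      rw [Finset.sum_range_succ]
      have : 0 ≤ c * α (ψ m) := mul_nonneg hc0.le (hα.nonneg fun x => (hψ01 m x).1)
      linarith
    have hcM : c = M / (m+1 : ℕ) := by rw [hc]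
    calc ∑ i ∈ Finset.range m, c * α (ψ i) + c
        ≤ ∑ i ∈ Finset.range (m+1), c * α (ψ i) + c := by linarith
      _ = α g + c := by rw [hαsum]
      _ = M / ((m+1 : ℕ) : ℝ) + α g := by rw [← hcM]; ring
  -- pass to the limit
  have hlim : Filter.Tendsto (fun n : ℕ => M / n + α g) Filter.atTop (nhds (α g)) := by
    have := (tendsto_const_div_atTop_nhds_zero_nat M).add
      (tendsto_const_nhds (x := α g) (f := Filter.atTop))
    simpa using this
  refine ge_of_tendsto hlim ?_
  filter_upwards [Filter.eventually_ge_atTop 1] with n hn using key n hn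

/-- Invariance of the Riesz measure under a homeomorphism preserving `α`. -/
theorem measure_preimage_eq (e : X ≃ₜ X)
    (hαe : ∀ g : C(X, ℝ), α (g.comp (e : C(X, X))) = α g)
    {s : Set X} (hs : MeasurableSet s) :
    (rieszContent hα).measure (e ⁻¹' s) = (rieszContent hα).measure s := by
  have hK : ∀ K : Compacts X,
      (rieszContent hα) (K.map e e.continuous) = (rieszContent hα) K := by
    intro K
    have hset : (K.map e e.continuous : Set X) = e '' K := rfl
    have hpre : preContent α (e '' (K : Set X)) = preContent α (K : Set X) := by
      unfold preContent
      congr 1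
      apply subset_antisymm
      · rintro - ⟨g, hg, rfl⟩
        refine ⟨g.comp (e : C(X, X)), ⟨fun x => hg.1 (e x), fun x hx => ?_⟩, hαe g⟩
        exact hg.2 (e x) (mem_image_of_mem e hx)
      · rintro - ⟨h, hh, rfl⟩
        refine ⟨h.comp (e.symm : C(X, X)), ⟨fun x => hh.1 (e.symm x), ?_⟩, ?_⟩
        · rintro - ⟨x, hx, rfl⟩
          simpa using hh.2 x hx
        · have hcomp : (h.comp (e.symm : C(X, X))).comp (e : C(X, X)) = h := by
            ext x
            simp
          calc α (h.comp (e.symm : C(X, X)))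
              = α ((h.comp (e.symm : C(X, X))).comp (e : C(X, X))) := (hαe _).symm
            _ = α h := by rw [hcomp]
    rw [rieszContent_apply, rieszContent_apply, hset, hpre]
  rw [Content.measure_apply _ (hs.preimage e.continuous.measurable),
    Content.measure_apply _ hs,
    (rieszContent hα).outerMeasure_preimage e hK s]

end TimeAvgAux

section MainProof
open Filter TimeAvgAux
open scoped Topology

/-- If every flow-invariant Borel probability measure gives `f` a positive
integral, then some time-T average of `f` is strictly positive everywhere. -/
theorem exists_positive_time_average
    {X : Type*} [MetricSpace X] [CompactSpace X]
    [MeasurableSpace X] [BorelSpace X]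
    (φ : ℝ → X → X)
    (hφc : Continuous fun p : ℝ × X => φ p.1 p.2)
    (hφ0 : ∀ x, φ 0 x = x)
    (hφadd : ∀ s t x, φ (s + t) x = φ s (φ t x))
    (f : X → ℝ) (hf : Continuous f)
    (hpos : ∀ μ : Measure X, IsProbabilityMeasure μ →
      (∀ t : ℝ, Measure.map (φ t) μ = μ) → 0 < ∫ x, f x ∂μ) :
    ∃ T : ℝ, 0 < T ∧ ∀ x : X,
      0 < (1 / T) * ∫ s in (0:ℝ)..T, f (φ s x) := by
  by_contra hcon
  push_neg at hcon
  -- basic continuity facts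
  have horb : ∀ y : X, Continuous fun s : ℝ => φ s y :=
    fun y => hφc.comp (continuous_id.prodMk continuous_const)
  have hφt : ∀ t : ℝ, Continuous (φ t) :=
    fun t => hφc.comp (continuous_const.prodMk continuous_id)
  -- choose witnesses of non-positive time averages
  have hsel : ∀ n : ℕ, ∃ x : X,
      (1 / ((n:ℝ)+1)) * ∫ s in (0:ℝ)..((n:ℝ)+1), f (φ s x) ≤ 0 :=
    fun n => hcon ((n:ℝ)+1) (by positivity)
  choose x hx using hsel
  -- the time-average functionals
  set I : ℕ → C(X, ℝ) → ℝ := fun n g =>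
    (1 / ((n:ℝ)+1)) * ∫ s in (0:ℝ)..((n:ℝ)+1), g (φ s (x n)) with hIdef
  have hintg : ∀ (n : ℕ) (g : C(X,ℝ)) (a b : ℝ),
      IntervalIntegrable (fun s => g (φ s (x n))) volume a b :=
    fun n g a b => (g.continuous.comp (horb (x n))).intervalIntegrable a b
  have hIbdd : ∀ (n : ℕ) (g : C(X,ℝ)), |I n g| ≤ ‖g‖ := by
    intro n g
    have hb := intervalIntegral.norm_integral_le_of_norm_le_const
      (C := ‖g‖) (f := fun s => g (φ s (x n))) (a := 0) (b := (n:ℝ)+1)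
      (fun s _ => g.norm_coe_le_norm _)
    have hn1 : (0:ℝ) < (n:ℝ)+1 := by positivity
    rw [show ((n:ℝ)+1) - 0 = (n:ℝ)+1 by ring, abs_of_pos hn1] at hb
    have : |I n g| = (1/((n:ℝ)+1)) * |∫ s in (0:ℝ)..((n:ℝ)+1), g (φ s (x n))| := by
      rw [hIdef, abs_mul, abs_of_pos (by positivity : (0:ℝ) < 1/((n:ℝ)+1))]
    rw [this, div_mul_eq_mul_div, one_mul, div_le_iff₀ hn1]
    calc |∫ s in (0:ℝ)..((n:ℝ)+1), g (φ s (x n))| ≤ ‖g‖ * ((n:ℝ)+1) := hb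
      _ = ‖g‖ * ((n:ℝ)+1) := rfl
  -- ultrafilter limits define the functional
  let 𝒰 : Ultrafilter ℕ := Ultrafilter.of atTop
  have h𝒰 : (𝒰 : Filter ℕ) ≤ atTop := Ultrafilter.of_le _
  have hlim : ∀ g : C(X,ℝ), ∃ a : ℝ, Tendsto (fun n => I n g) 𝒰 (𝓝 a) := by
    intro g
    obtain ⟨a, -, ha⟩ := (isCompact_Icc (a := -‖g‖) (b := ‖g‖)).ultrafilter_le_nhds
      (𝒰.map fun n => I n g)
      (by
        rw [Ultrafilter.coe_map, le_principal_iff, mem_map]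
        exact univ_mem' fun n => abs_le.mp (hIbdd n g))
    exact ⟨a, ha⟩
  choose αf hαf using hlim
  have huniq : ∀ (g : C(X,ℝ)) (b : ℝ),
      Tendsto (fun n => I n g) 𝒰 (𝓝 b) → αf g = b :=
    fun g b hb => tendsto_nhds_unique (hαf g) hb
  -- I is linear, monotone, normalized
  have hIadd : ∀ n (g h : C(X,ℝ)), I n (g + h) = I n g + I n h := by
    intro n g h
    simp only [hIdef, ContinuousMap.add_apply]
    rw [intervalIntegral.integral_add (hintg n g _ _) (hintg n h _ _)]
    ring
  have hIsmul : ∀ (n) (c : ℝ) (g : C(X,ℝ)), I n (c • g) = c * I n g := by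
    intro n c g
    simp only [hIdef, ContinuousMap.smul_apply, smul_eq_mul]
    rw [intervalIntegral.integral_const_mul]
    ring
  have hImono : ∀ n (g h : C(X,ℝ)), (∀ y, g y ≤ h y) → I n g ≤ I n h := by
    intro n g h hgh
    have h1 := intervalIntegral.integral_mono_on
      (by positivity : (0:ℝ) ≤ (n:ℝ)+1) (hintg n g 0 _) (hintg n h 0 _)
      (fun s _ => hgh (φ s (x n)))
    exact mul_le_mul_of_nonneg_left h1 (by positivity)
  have hIone : ∀ n, I n (1 : C(X,ℝ)) = 1 := by
    intro n
    simp only [hIdef, ContinuousMap.one_apply]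
    rw [intervalIntegral.integral_const]
    have hn1 : ((n:ℝ)+1) ≠ 0 := by positivity
    field_simp
    simp
  have hpf : IsPosFunctional αf := by
    constructor
    · intro g h
      exact huniq _ _ (((hαf g).add (hαf h)).congr fun n => (hIadd n g h).symm)
    · intro c g
      exact huniq _ _ (((hαf g).const_mul c).congr fun n => (hIsmul n c g).symm)
    · intro g h hgh
      exact le_of_tendsto_of_tendsto' (hαf g) (hαf h) fun n => hImono n g h hgh
    · exact huniq _ _ (tendsto_const_nhds.congr fun n => (hIone n).symm)
  -- αf of f is nonpositive
  set fc : C(X, ℝ) := ⟨f, hf⟩ with hfc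
  have hαf_nonpos : αf fc ≤ 0 :=
    le_of_tendsto (hαf fc) (Eventually.of_forall fun n => hx n)
  -- the flow homeomorphisms
  have hmeas_t : ∀ t : ℝ, Measurable (φ t) := fun t => (hφt t).measurable
  let e : ℝ → X ≃ₜ X := fun t =>
    { toFun := φ t
      invFun := φ (-t)
      left_inv := fun y => by rw [← hφadd]; simp [hφ0]
      right_inv := fun y => by rw [← hφadd]; simp [hφ0]
      continuous_toFun := hφt t
      continuous_invFun := hφt (-t) }
  -- invariance of αf under the flow
  have hαinv : ∀ (t : ℝ) (g : C(X,ℝ)),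
      αf (g.comp ((e t) : C(X, X))) = αf g := by
    intro t g
    apply huniq
    have hdecomp : ∀ n : ℕ, I n (g.comp ((e t) : C(X, X)))
        = I n g + (1/((n:ℝ)+1)) * ((∫ s in t..(0:ℝ), g (φ s (x n)))
            + ∫ s in ((n:ℝ)+1)..(t+((n:ℝ)+1)), g (φ s (x n))) := by
      intro n
      have h1 : ∀ s : ℝ, (g.comp ((e t) : C(X, X))) (φ s (x n)) = g (φ (t + s) (x n)) := by
        intro s
        simp only [ContinuousMap.comp_apply]
        rw [hφadd]
        rfl
      have h2 : (∫ s in (0:ℝ)..((n:ℝ)+1), (g.comp ((e t) : C(X, X))) (φ s (x n)))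
          = ∫ s in t..(t+((n:ℝ)+1)), g (φ s (x n)) := by
        rw [show (∫ s in (0:ℝ)..((n:ℝ)+1), (g.comp ((e t) : C(X, X))) (φ s (x n)))
            = ∫ s in (0:ℝ)..((n:ℝ)+1), g (φ (t + s) (x n)) from
          intervalIntegral.integral_congr fun s _ => h1 s]
        have h3 := intervalIntegral.integral_comp_add_left (a := (0:ℝ)) (b := (n:ℝ)+1)
          (fun u => g (φ u (x n))) t
        rw [h3, add_zero]
      have h3 : (∫ s in t..(t+((n:ℝ)+1)), g (φ s (x n)))
          = (∫ s in t..(0:ℝ), g (φ s (x n))) + ∫ s in (0:ℝ)..(t+((n:ℝ)+1)), g (φ s (x n)) :=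
        (intervalIntegral.integral_add_adjacent_intervals (hintg n g t 0)
          (hintg n g 0 _)).symm
      have h4 : (∫ s in (0:ℝ)..(t+((n:ℝ)+1)), g (φ s (x n)))
          = (∫ s in (0:ℝ)..((n:ℝ)+1), g (φ s (x n)))
            + ∫ s in ((n:ℝ)+1)..(t+((n:ℝ)+1)), g (φ s (x n)) :=
        (intervalIntegral.integral_add_adjacent_intervals (hintg n g 0 _) (hintg n g _ _)).symm
      simp only [hIdef]
      rw [h2, h3, h4]
      ring
    have herr : Tendsto (fun n : ℕ => (1/((n:ℝ)+1)) * ((∫ s in t..(0:ℝ), g (φ s (x n)))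
        + ∫ s in ((n:ℝ)+1)..(t+((n:ℝ)+1)), g (φ s (x n)))) atTop (𝓝 0) := by
      have htend : Tendsto (fun n : ℕ => (2*‖g‖*|t|) * (1/((n:ℝ)+1))) atTop (𝓝 0) := by
        have := tendsto_one_div_add_atTop_nhds_zero_nat.const_mul (2*‖g‖*|t|)
        simpa using this
      refine squeeze_zero_norm (fun n => ?_) htend
      have hb1 : |∫ s in t..(0:ℝ), g (φ s (x n))| ≤ ‖g‖ * |t| := by
        have := intervalIntegral.norm_integral_le_of_norm_le_const
          (C := ‖g‖) (f := fun s => g (φ s (x n))) (a := t) (b := 0)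
          (fun s _ => g.norm_coe_le_norm _)
        rwa [zero_sub, abs_neg] at this
      have hb2 : |∫ s in ((n:ℝ)+1)..(t+((n:ℝ)+1)), g (φ s (x n))| ≤ ‖g‖ * |t| := by
        have := intervalIntegral.norm_integral_le_of_norm_le_const
          (C := ‖g‖) (f := fun s => g (φ s (x n))) (a := (n:ℝ)+1) (b := t+((n:ℝ)+1))
          (fun s _ => g.norm_coe_le_norm _)
        rwa [show t+((n:ℝ)+1) - ((n:ℝ)+1) = t by ring] at this
      have hn1 : (0:ℝ) < 1/((n:ℝ)+1) := by positivity
      rw [Real.norm_eq_abs, abs_mul, abs_of_pos hn1]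
      rw [mul_comm ((2*‖g‖*|t|)) (1/((n:ℝ)+1))]
      apply mul_le_mul_of_nonneg_left _ hn1.le
      calc |(∫ s in t..(0:ℝ), g (φ s (x n)))
            + ∫ s in ((n:ℝ)+1)..(t+((n:ℝ)+1)), g (φ s (x n))|
          ≤ |∫ s in t..(0:ℝ), g (φ s (x n))|
            + |∫ s in ((n:ℝ)+1)..(t+((n:ℝ)+1)), g (φ s (x n))| := abs_add_le _ _
        _ ≤ ‖g‖ * |t| + ‖g‖ * |t| := add_le_add hb1 hb2
        _ = 2*‖g‖*|t| := by ring
    have hfin : Tendsto (fun n => I n g + (1/((n:ℝ)+1)) * ((∫ s in t..(0:ℝ), g (φ s (x n)))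
        + ∫ s in ((n:ℝ)+1)..(t+((n:ℝ)+1)), g (φ s (x n)))) 𝒰 (𝓝 (αf g + 0)) :=
      (hαf g).add (herr.mono_left h𝒰)
    rw [add_zero] at hfin
    exact hfin.congr fun n => (hdecomp n).symm
  -- the invariant measure
  haveI hprob : IsProbabilityMeasure (rieszContent hpf).measure := isProbability hpf
  set μ := (rieszContent hpf).measure with hμdef
  have hinv : ∀ t : ℝ, Measure.map (φ t) μ = μ := by
    intro t
    refine Measure.ext fun s hs => ?_
    rw [Measure.map_apply (hmeas_t t) hs]
    exact measure_preimage_eq hpf (e t) (hαinv t) hs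
  have hposint := hpos μ hprob hinv
  have hintf : Integrable f μ :=
    hf.integrable_of_hasCompactSupport (HasCompactSupport.of_compactSpace f)
  set C : ℝ := ‖fc‖ with hC
  have hgnn : ∀ y, 0 ≤ (fc + C • (1:C(X,ℝ))) y := by
    intro y
    have h1 : |fc y| ≤ C := by
      simpa [Real.norm_eq_abs] using fc.norm_coe_le_norm y
    simp only [ContinuousMap.add_apply, ContinuousMap.smul_apply,
      ContinuousMap.one_apply, smul_eq_mul, mul_one]
    have h2 := neg_abs_le (fc y)
    linarith
  have hrep := integral_le_of_nonneg hpf hgnn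
  have hL : ∫ y, (fc + C • (1:C(X,ℝ))) y ∂μ = (∫ y, f y ∂μ) + C := by
    have heq : (fun y => (fc + C • (1:C(X,ℝ))) y) = fun y => f y + C := by
      funext y
      simp only [ContinuousMap.add_apply, ContinuousMap.smul_apply,
        ContinuousMap.one_apply, smul_eq_mul, mul_one]
      rfl
    rw [heq, integral_add hintf (integrable_const C), integral_const]
    simp
  have hR : αf (fc + C • (1:C(X,ℝ))) = αf fc + C := by
    rw [hpf.add, hpf.smul, hpf.one]
    ring
  rw [hL, hR] at hrep
  linarith

end MainProof
end

section
/- Let E be Minkowski space ℝ^{2,1} (ℝ³ with the form ⟨v,v⟩ = v₁² + v₂² − v₃²) and Γ a group acting on E × V by (p,v) ↦ (γ(p), L(γ)v) for isometries γ of E. If the geodesic through (p, v) with v timelike (⟨v,v⟩ = −1) has the property that Γ acts properly on the hyperboloid S_{−1} = {v : ⟨v,v⟩ = −1} via linear parts, and Γ is infinite discrete, then the induced geodesic flow on (E × S_{−1})/Γ has no recurrent orbits: no timelike geodesic in the quotient flat Lorentz manifold M = E/Γ is recurrent. -/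
open Filter

/-- In Minkowski space `ℝ^{2,1}`, if the linear parts of an infinite discrete
group `Γ` of Lorentz isometries act properly on the hyperboloid `S₋₁`, then the geodesic flow
on `(E × S₋₁)/Γ` has no recurrent orbits: no timelike geodesic of `M = E/Γ` is recurrent. -/
theorem no_recurrent_timelike_geodesics
    {Γ : Type*} [Group Γ] [Infinite Γ]
    (Q : (Fin 3 → ℝ) → ℝ)
    (hQ : ∀ v : Fin 3 → ℝ, Q v = v 0 ^ 2 + v 1 ^ 2 - v 2 ^ 2)
    (ρ : Γ →* ((Fin 3 → ℝ) ≃ᵃ[ℝ] (Fin 3 → ℝ)))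
    (hisom : ∀ (γ : Γ) (v : Fin 3 → ℝ), Q ((ρ γ).linear v) = Q v)
    (hρinj : Function.Injective ρ)
    (hproper : ∀ K : Set (Fin 3 → ℝ), IsCompact K → K ⊆ {v | Q v = -1} →
      {γ : Γ | (((ρ γ).linear : (Fin 3 → ℝ) → (Fin 3 → ℝ)) '' K ∩ K).Nonempty}.Finite)
    (p v : Fin 3 → ℝ) (hv : Q v = -1) :
    ¬ ∃ (t : ℕ → ℝ) (γ : ℕ → Γ),
        Tendsto t atTop atTop ∧
        Tendsto (fun n => ((ρ (γ n)) (p + t n • v), ((ρ (γ n)).linear v))) atTop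
          (nhds (p, v)) := by
  rintro ⟨t, γ, ht, hconv⟩
  -- v has a nonzero coordinate
  have hvne : v ≠ 0 := by
    intro h
    rw [h, hQ] at hv
    norm_num at hv
  obtain ⟨i, hi⟩ : ∃ i, v i ≠ 0 := by
    by_contra h
    push_neg at h
    exact hvne (funext fun i => h i)
  -- split the convergence
  have h1 : Tendsto (fun n => (ρ (γ n)) (p + t n • v)) atTop (nhds p) :=
    (continuous_fst.tendsto (p, v)).comp hconv
  have h2 : Tendsto (fun n => ((ρ (γ n)).linear v)) atTop (nhds v) :=
    (continuous_snd.tendsto (p, v)).comp hconv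
  -- compact set in the hyperboloid
  set K : Set (Fin 3 → ℝ) := insert v (Set.range fun n => (ρ (γ n)).linear v) with hK
  have hKc : IsCompact K := h2.isCompact_insert_range
  have hKsub : K ⊆ {w | Q w = -1} := by
    rintro x hx
    rcases hx with rfl | ⟨n, rfl⟩
    · exact hv
    · rw [Set.mem_setOf_eq, hisom]; exact hv
  have hfin := hproper K hKc hKsub
  have hrange : Set.range γ ⊆
      {γ' : Γ | (((ρ γ').linear : (Fin 3 → ℝ) → (Fin 3 → ℝ)) '' K ∩ K).Nonempty} := by
    rintro _ ⟨n, rfl⟩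
    exact ⟨(ρ (γ n)).linear v, ⟨v, Set.mem_insert _ _, rfl⟩,
      Set.mem_insert_of_mem _ ⟨n, rfl⟩⟩
  have hrfin : (Set.range γ).Finite := hfin.subset hrange
  -- pigeonhole: some g occurs frequently
  have hg : ∃ g : Γ, ∃ᶠ n in atTop, γ n = g := by
    by_contra h
    push_neg at h
    have hall : ∀ᶠ n in atTop, ∀ g ∈ Set.range γ, γ n ≠ g :=
      (hrfin.eventually_all).mpr fun g _ => h g
    rcases hall.exists with ⟨n, hn⟩
    exact hn (γ n) ⟨n, rfl⟩ rfl
  obtain ⟨g, hg⟩ := hg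
  set l : Filter ℕ := atTop ⊓ 𝓟 {n | γ n = g} with hl
  have hne : l.NeBot := frequently_iff_neBot.mp hg
  have heq : ∀ᶠ n in l, γ n = g :=
    eventually_inf_principal.mpr (Eventually.of_forall fun n h => h)
  have h1' : Tendsto (fun n => (ρ g) (p + t n • v)) l (nhds p) :=
    (h1.mono_left inf_le_left).congr' (heq.mono fun n h => by rw [h])
  have hcont : Continuous ((ρ g).symm : (Fin 3 → ℝ) → (Fin 3 → ℝ)) :=
    AffineMap.continuous_of_finiteDimensional ((ρ g).symm : (Fin 3 → ℝ) →ᵃ[ℝ] (Fin 3 → ℝ))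
  have h3 : Tendsto (fun n => p + t n • v) l (nhds ((ρ g).symm p)) := by
    have h := (hcont.tendsto p).comp h1'
    exact h.congr fun n => by simp
  -- extract the coordinate i and conclude t converges
  have h4 : Tendsto (fun n => t n) l
      (nhds (((ρ g).symm p i - p i) / v i)) := by
    have hc : Continuous (fun x : Fin 3 → ℝ => (x i - p i) / v i) := by
      fun_prop
    have := (hc.tendsto _).comp h3
    refine this.congr fun n => ?_
    simp only [Function.comp]
    have : (p + t n • v) i = p i + t n * v i := by
      simp [Pi.add_apply, Pi.smul_apply, smul_eq_mul]
    rw [this]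
    field_simp
    ring
  exact not_tendsto_atTop_of_tendsto_nhds h4 (ht.mono_left inf_le_left)
end

section
/- Let X be a compact metric space with a continuous flow φ and f: X → ℝ continuous with ∫ f dμ > 0 for every φ-invariant Borel probability measure μ. Then there exist T > 0 and c > 0 such that for all x ∈ X, ∫₀ᵀ f(φ_s(x)) ds ≥ c T. -/
set_option linter.unusedSectionVars false

open MeasureTheory

open scoped BoundedContinuousFunction NNReal ENNReal Topology

private theorem exists_mem_Ioc_aux (c : ℕ → ℝ) :
    ∀ (n : ℕ) (y : ℝ), c 0 < y → y ≤ c n → ∃ i, i < n ∧ c i < y ∧ y ≤ c (i + 1) := by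
  intro n
  induction n with
  | zero => exact fun y h1 h2 => absurd (lt_of_lt_of_le h1 h2) (lt_irrefl _)
  | succ n ih =>
    intro y h1 h2
    by_cases hcn : c n < y
    · exact ⟨n, Nat.lt_succ_self n, hcn, h2⟩
    · obtain ⟨i, hi, h3, h4⟩ := ih y h1 (not_lt.mp hcn)
      exact ⟨i, Nat.lt_succ_of_lt hi, h3, h4⟩

section RMK

variable {X : Type*} [MetricSpace X] [CompactSpace X]
  [MeasurableSpace X] [BorelSpace X]
  (ℓ : (X →ᵇ ℝ) → ℝ)

namespace RMKaux

variable (hadd : ∀ f g : X →ᵇ ℝ, ℓ (f + g) = ℓ f + ℓ g)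
  (hsmul : ∀ (c : ℝ) (f : X →ᵇ ℝ), ℓ (c • f) = c * ℓ f)
  (hmono : ∀ f g : X →ᵇ ℝ, f ≤ g → ℓ f ≤ ℓ g)
  (hone : ℓ 1 = 1)

section basic

include hsmul in
theorem ell_zero : ℓ 0 = 0 := by
  have := hsmul 0 0
  simpa using this

include hsmul hmono in
theorem ell_nonneg {f : X →ᵇ ℝ} (hf : 0 ≤ f) : 0 ≤ ℓ f := by
  have := hmono 0 f hf
  rwa [ell_zero ℓ hsmul] at this

include hsmul in
theorem ell_neg (f : X →ᵇ ℝ) : ℓ (-f) = - ℓ f := by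
  have h1 : (-1 : ℝ) • f = -f := by ext x; simp
  have := hsmul (-1) f
  rw [h1] at this
  rw [this]; ring

include hadd hsmul in
theorem ell_sum {n : ℕ} (F : Fin n → (X →ᵇ ℝ)) :
    ℓ (∑ i, F i) = ∑ i, ℓ (F i) := by
  classical
  induction n with
  | zero => simpa using ell_zero ℓ hsmul
  | succ n ih =>
    rw [Fin.sum_univ_castSucc, hadd, ih (fun i => F i.castSucc), Fin.sum_univ_castSucc]

end basic

/-- The set of "test functions" dominating the indicator of `K`. -/
def TestSet (K : Set X) : Set (X →ᵇ ℝ) :=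
  {f : X →ᵇ ℝ | 0 ≤ f ∧ ∀ x ∈ K, 1 ≤ f x}

/-- The Riesz content of a compact set. -/
noncomputable def rc (K : Set X) : ℝ :=
  sInf (ℓ '' TestSet K)

theorem one_mem_TestSet (K : Set X) : (1 : X →ᵇ ℝ) ∈ TestSet K := by
  constructor
  · intro x; simp
  · intro x _; simp

theorem TestSet_nonempty (K : Set X) : (ℓ '' TestSet K).Nonempty :=
  ⟨ℓ 1, ⟨1, one_mem_TestSet K, rfl⟩⟩

include hsmul hmono in
theorem TestSet_bddBelow (K : Set X) : BddBelow (ℓ '' TestSet K) := by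
  refine ⟨0, ?_⟩
  rintro r ⟨f, hf, rfl⟩
  exact ell_nonneg ℓ hsmul hmono hf.1

include hsmul hmono in
theorem rc_nonneg (K : Set X) : 0 ≤ rc ℓ K :=
  le_csInf (TestSet_nonempty ℓ K) (by rintro r ⟨f, hf, rfl⟩; exact ell_nonneg ℓ hsmul hmono hf.1)

include hsmul hmono in
theorem rc_le {K : Set X} {f : X →ᵇ ℝ} (hf : f ∈ TestSet K) : rc ℓ K ≤ ℓ f :=
  csInf_le (TestSet_bddBelow ℓ hsmul hmono K) ⟨f, hf, rfl⟩

include hone hsmul hmono in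
theorem rc_le_one (K : Set X) : rc ℓ K ≤ 1 := by
  have := rc_le ℓ hsmul hmono (one_mem_TestSet (X := X) K)
  rwa [hone] at this

theorem exists_lt_rc {K : Set X} {ε : ℝ} (hε : 0 < ε) :
    ∃ f ∈ TestSet (X := X) K, ℓ f < rc ℓ K + ε := by
  obtain ⟨r, ⟨f, hf, rfl⟩, hr⟩ :=
    exists_lt_of_csInf_lt (TestSet_nonempty ℓ K) (lt_add_of_pos_right (rc ℓ K) hε)
  exact ⟨f, hf, hr⟩

include hsmul hmono in
theorem rc_mono {K₁ K₂ : Set X} (h : K₁ ⊆ K₂) : rc ℓ K₁ ≤ rc ℓ K₂ := by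
  apply le_csInf (TestSet_nonempty ℓ K₂)
  rintro r ⟨f, hf, rfl⟩
  exact rc_le ℓ hsmul hmono ⟨hf.1, fun x hx => hf.2 x (h hx)⟩

include hadd hsmul hmono in
theorem rc_sup_le (K₁ K₂ : Set X) : rc ℓ (K₁ ∪ K₂) ≤ rc ℓ K₁ + rc ℓ K₂ := by
  refine le_of_forall_pos_le_add ?_
  intro ε hε
  obtain ⟨f₁, hf₁, hlt₁⟩ := exists_lt_rc ℓ (K := K₁) (half_pos hε)
  obtain ⟨f₂, hf₂, hlt₂⟩ := exists_lt_rc ℓ (K := K₂) (half_pos hε)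
  have hp₁ : ∀ x, 0 ≤ f₁ x := fun x => by simpa using hf₁.1 x
  have hp₂ : ∀ x, 0 ≤ f₂ x := fun x => by simpa using hf₂.1 x
  have hmem : f₁ + f₂ ∈ TestSet (X := X) (K₁ ∪ K₂) := by
    constructor
    · exact add_nonneg hf₁.1 hf₂.1
    · rintro x (hx | hx)
      · have h1 := hf₁.2 x hx
        have h2 := hp₂ x
        simp only [BoundedContinuousFunction.coe_add, Pi.add_apply]
        linarith
      · have h1 := hf₂.2 x hx
        have h2 := hp₁ x
        simp only [BoundedContinuousFunction.coe_add, Pi.add_apply]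
        linarith
  calc rc ℓ (K₁ ∪ K₂) ≤ ℓ (f₁ + f₂) := rc_le ℓ hsmul hmono hmem
    _ = ℓ f₁ + ℓ f₂ := hadd _ _
    _ ≤ (rc ℓ K₁ + ε / 2) + (rc ℓ K₂ + ε / 2) := by linarith
    _ = rc ℓ K₁ + rc ℓ K₂ + ε := by ring

include hadd hsmul hmono in
theorem rc_sup_disjoint {K₁ K₂ : Set X} (hK₁ : IsClosed K₁) (hK₂ : IsClosed K₂)
    (hd : Disjoint K₁ K₂) : rc ℓ (K₁ ∪ K₂) = rc ℓ K₁ + rc ℓ K₂ := by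
  refine le_antisymm (rc_sup_le ℓ hadd hsmul hmono K₁ K₂) ?_
  apply le_csInf (TestSet_nonempty ℓ _)
  rintro r ⟨f, hf, rfl⟩
  obtain ⟨g, hg0, hg1, hg01⟩ := exists_continuous_zero_one_of_isClosed hK₂ hK₁ hd.symm
  set gB : X →ᵇ ℝ := BoundedContinuousFunction.mkOfCompact g with hgB
  have hgB0 : ∀ x, 0 ≤ gB x := fun x => (hg01 x).1
  have hgB1 : ∀ x, gB x ≤ 1 := fun x => (hg01 x).2
  have hfx : ∀ x, 0 ≤ f x := fun x => by simpa using hf.1 x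
  have hmem₁ : f * gB ∈ TestSet (X := X) K₁ := by
    constructor
    · intro x
      simp only [BoundedContinuousFunction.coe_zero, Pi.zero_apply,
        BoundedContinuousFunction.coe_mul, Pi.mul_apply]
      exact mul_nonneg (hfx x) (hgB0 x)
    · intro x hx
      have hfge : 1 ≤ f x := hf.2 x (Or.inl hx)
      have : gB x = 1 := hg1 hx
      simp only [BoundedContinuousFunction.coe_mul, Pi.mul_apply, this, mul_one]
      exact hfge
  have hmem₂ : f * (1 - gB) ∈ TestSet (X := X) K₂ := by
    constructor
    · intro x
      have hx1 : (f * (1 - gB)) x = f x * (1 - gB x) := by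
        simp [BoundedContinuousFunction.coe_mul, BoundedContinuousFunction.coe_sub]
      simp only [BoundedContinuousFunction.coe_zero, Pi.zero_apply, hx1]
      exact mul_nonneg (hfx x) (by simpa using hgB1 x)
    · intro x hx
      have hfge : 1 ≤ f x := hf.2 x (Or.inr hx)
      have h0 : gB x = 0 := hg0 hx
      have hx1 : (f * (1 - gB)) x = f x * (1 - gB x) := by
        simp [BoundedContinuousFunction.coe_mul, BoundedContinuousFunction.coe_sub]
      rw [hx1, h0]
      simpa using hfge
  have hsplit : f * gB + f * (1 - gB) = f := by ring
  calc rc ℓ K₁ + rc ℓ K₂ ≤ ℓ (f * gB) + ℓ (f * (1 - gB)) :=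
        add_le_add (rc_le ℓ hsmul hmono hmem₁) (rc_le ℓ hsmul hmono hmem₂)
    _ = ℓ (f * gB + f * (1 - gB)) := (hadd _ _).symm
    _ = ℓ f := by rw [hsplit]

/-- The Riesz content as a `MeasureTheory.Content`. -/
noncomputable def rieszContent : Content X where
  toFun K := (rc ℓ K).toNNReal
  mono' K₁ K₂ h := by
    have := rc_mono ℓ hsmul hmono h
    exact Real.toNNReal_mono this
  sup_disjoint' K₁ K₂ hd h₁ h₂ := by
    have h := rc_sup_disjoint ℓ hadd hsmul hmono h₁ h₂ hd
    show (rc ℓ ((K₁ ⊔ K₂ : TopologicalSpace.Compacts X) : Set X)).toNNReal = _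
    rw [TopologicalSpace.Compacts.coe_sup, h,
      Real.toNNReal_add (rc_nonneg ℓ hsmul hmono _) (rc_nonneg ℓ hsmul hmono _)]
  sup_le' K₁ K₂ := by
    have h := rc_sup_le ℓ hadd hsmul hmono (K₁ : Set X) K₂
    show (rc ℓ ((K₁ ⊔ K₂ : TopologicalSpace.Compacts X) : Set X)).toNNReal ≤ _
    rw [TopologicalSpace.Compacts.coe_sup]
    exact le_trans (Real.toNNReal_mono h) Real.toNNReal_add_le

/-- The measure associated to `ℓ`. -/
noncomputable def rieszMeasure : Measure X :=
  (rieszContent ℓ hadd hsmul hmono).measure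

include hadd hsmul hmono hone

theorem rc_univ : rc ℓ (Set.univ : Set X) = 1 := by
  refine le_antisymm (rc_le_one ℓ hsmul hmono hone _) ?_
  apply le_csInf (TestSet_nonempty ℓ _)
  rintro r ⟨f, hf, rfl⟩
  have h1f : (1 : X →ᵇ ℝ) ≤ f := by
    intro x
    simpa using hf.2 x (Set.mem_univ x)
  have := hmono 1 f h1f
  rwa [hone] at this

theorem rieszMeasure_univ_eq : rieszMeasure ℓ hadd hsmul hmono Set.univ = 1 := by
  have hco : IsCompact (Set.univ : Set X) := isCompact_univ
  have hop : IsOpen (Set.univ : Set X) := isOpen_univ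
  have hC : (rieszContent ℓ hadd hsmul hmono).toFun ⟨Set.univ, hco⟩ = 1 := by
    show (rc ℓ (Set.univ : Set X)).toNNReal = 1
    rw [rc_univ ℓ hadd hsmul hmono hone]
    simp
  have h1 : rieszMeasure ℓ hadd hsmul hmono Set.univ
      = (rieszContent ℓ hadd hsmul hmono).outerMeasure Set.univ :=
    (rieszContent ℓ hadd hsmul hmono).measure_apply MeasurableSet.univ
  refine le_antisymm ?_ ?_
  · rw [h1, Content.outerMeasure_of_isOpen _ _ hop]
    have h2 := Content.innerContent_le (rieszContent ℓ hadd hsmul hmono)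
      ⟨Set.univ, hop⟩ ⟨Set.univ, hco⟩ subset_rfl
    refine le_trans h2 ?_
    rw [show (rieszContent ℓ hadd hsmul hmono) ⟨Set.univ, hco⟩ = ((rieszContent ℓ hadd hsmul hmono).toFun ⟨Set.univ, hco⟩ : ℝ≥0∞) from rfl, hC]
    simp
  · rw [h1]
    have h3 := Content.le_outerMeasure_compacts (rieszContent ℓ hadd hsmul hmono)
      ⟨Set.univ, hco⟩
    rw [show (rieszContent ℓ hadd hsmul hmono) ⟨Set.univ, hco⟩ = ((rieszContent ℓ hadd hsmul hmono).toFun ⟨Set.univ, hco⟩ : ℝ≥0∞) from rfl, hC] at h3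
    simpa using h3

theorem rieszMeasure_univ :
    rieszMeasure ℓ hadd hsmul hmono Set.univ = 1 :=
  rieszMeasure_univ_eq ℓ hadd hsmul hmono hone

theorem rieszMeasure_isFiniteMeasure : IsFiniteMeasure (rieszMeasure ℓ hadd hsmul hmono) := by
  constructor
  rw [rieszMeasure_univ ℓ hadd hsmul hmono hone]
  exact ENNReal.one_lt_top

/-- Rudin's inequality `ℓ h ≤ μ U` for `h` supported in the open set `U`. -/
theorem ell_le_measure_open {U : Set X} (hU : IsOpen U) {h : X →ᵇ ℝ}
    (h0 : 0 ≤ h) (h1 : h ≤ 1) (hsupp : tsupport h ⊆ U) :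
    ℓ h ≤ (rieszMeasure ℓ hadd hsmul hmono U).toReal := by
  set K : Set X := tsupport h with hK
  have hKc : IsCompact K := (isClosed_tsupport _).isCompact
  -- Step 1 : `ℓ h ≤ rc K`
  have step1 : ℓ h ≤ rc ℓ K := by
    apply le_csInf (TestSet_nonempty ℓ _)
    rintro r ⟨f, hf, rfl⟩
    refine hmono h f ?_
    intro x
    by_cases hx : x ∈ K
    · exact le_trans (h1 x) (hf.2 x hx)
    · have hzero : h x = 0 := image_eq_zero_of_notMem_tsupport hx
      have := hf.1 x
      simp only [BoundedContinuousFunction.coe_zero, Pi.zero_apply] at this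
      simpa [hzero] using this
  -- Step 2 : `rc K ≤ μ U` in `ℝ≥0∞`
  have step2 : ((rc ℓ K).toNNReal : ℝ≥0∞) ≤ rieszMeasure ℓ hadd hsmul hmono U := by
    have h4 : rieszMeasure ℓ hadd hsmul hmono U
        = (rieszContent ℓ hadd hsmul hmono).outerMeasure U :=
      (rieszContent ℓ hadd hsmul hmono).measure_apply hU.measurableSet
    rw [h4, Content.outerMeasure_of_isOpen _ _ hU]
    exact Content.le_innerContent _ ⟨K, hKc⟩ ⟨U, hU⟩ hsupp
  have hfin : rieszMeasure ℓ hadd hsmul hmono U ≠ ∞ := by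
    haveI := rieszMeasure_isFiniteMeasure ℓ hadd hsmul hmono hone
    exact measure_ne_top _ _
  have step3 : ((rc ℓ K).toNNReal : ℝ) ≤ (rieszMeasure ℓ hadd hsmul hmono U).toReal := by
    have := ENNReal.toReal_mono hfin step2
    simpa using this
  refine le_trans step1 (le_trans ?_ step3)
  rw [Real.coe_toNNReal _ (rc_nonneg ℓ hsmul hmono K)]

set_option maxHeartbeats 2000000 in
/-- The key Rudin inequality: `ℓ g ≤ ∫ g dμ`. -/
theorem ell_le_integral (g : X →ᵇ ℝ) :
    ℓ g ≤ ∫ x, g x ∂(rieszMeasure ℓ hadd hsmul hmono) := by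
  set μ : Measure X := rieszMeasure ℓ hadd hsmul hmono with hμdef
  haveI hprob : IsProbabilityMeasure μ := ⟨rieszMeasure_univ ℓ hadd hsmul hmono hone⟩
  have hgint : Integrable (⇑g) μ := g.integrable μ
  set b : ℝ := ‖g‖ with hb
  have hb0 : 0 ≤ b := norm_nonneg g
  have key : ∀ δ : ℝ, 0 < δ → δ ≤ 1 → ℓ g ≤ (∫ x, g x ∂μ) + δ * (2 * b + 4) := by
    intro δ hδ0 hδ1
    set c : ℕ → ℝ := fun i => (-b - δ) + i * δ with hc
    have hcmono : ∀ p q : ℕ, p ≤ q → c p ≤ c q := by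
      intro p q hpq
      have hle : (p : ℝ) ≤ q := Nat.cast_le.mpr hpq
      rw [hc]
      simp only []
      nlinarith
    set n : ℕ := ⌈2 * b / δ⌉₊ + 1 with hn
    have hnpos : 0 < (n : ℝ) := by
      rw [hn]; push_cast; positivity
    have hcn : b ≤ c n := by
      have h1 : 2 * b / δ ≤ (⌈2 * b / δ⌉₊ : ℝ) := Nat.le_ceil _
      have h2 : 2 * b = 2 * b / δ * δ := by field_simp
      rw [hc, hn]
      push_cast
      nlinarith
    have hcnb : c n ≤ b + δ := by
      have h1 : (⌈2 * b / δ⌉₊ : ℝ) < 2 * b / δ + 1 := Nat.ceil_lt_add_one (by positivity)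
      have h2 : 2 * b / δ * δ = 2 * b := by field_simp
      rw [hc, hn]
      push_cast
      nlinarith
    set E : Fin n → Set X := fun i => ⇑g ⁻¹' Set.Ioc (c i.val) (c (i.val + 1)) with hE
    have hEmeas : ∀ i, MeasurableSet (E i) := fun i =>
      g.continuous.measurable measurableSet_Ioc
    have hEdisj : Pairwise (Function.onFun Disjoint E) := by
      have haux : ∀ p q : Fin n, p.val < q.val → Disjoint (E p) (E q) := by
        intro p q hpq
        rw [Set.disjoint_left]
        intro y hy1 hy2
        rw [hE] at hy1 hy2
        simp only [Set.mem_preimage, Set.mem_Ioc] at hy1 hy2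
        have h1 : c (p.val + 1) ≤ c q.val := hcmono _ _ hpq
        linarith [hy1.2, hy2.1]
      intro i j hij
      rcases lt_or_gt_of_ne (fun h => hij (Fin.ext h)) with h | h
      · exact haux i j h
      · exact (haux j i h).symm
    have hEcover : (⋃ i, E i) = Set.univ := by
      apply Set.eq_univ_of_forall
      intro x
      have habs : |g x| ≤ b := by
        simpa [Real.norm_eq_abs] using g.norm_coe_le_norm x
      have hgx1 : c 0 < g x := by
        have := (abs_le.mp habs).1
        rw [hc]
        simp only []
        push_cast
        linarith
      have hgx2 : g x ≤ c n := le_trans (abs_le.mp habs).2 hcn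
      obtain ⟨i, hi, h3, h4⟩ := exists_mem_Ioc_aux c n (g x) hgx1 hgx2
      exact Set.mem_iUnion.mpr ⟨⟨i, hi⟩, Set.mem_preimage.mpr ⟨h3, h4⟩⟩
    set t : Fin n → ℝ := fun i => c (i.val + 1) + δ with ht
    have hδn0 : (0:ℝ) < δ / n := by positivity
    set η : ℝ≥0∞ := ENNReal.ofReal (δ / n) with hη
    have hη0 : 0 < η := by rw [hη]; exact ENNReal.ofReal_pos.mpr hδn0
    have hUex : ∀ i : Fin n, ∃ V : Set X, E i ⊆ V ∧ IsOpen V ∧ μ V < μ (E i) + η :=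
      fun i => Set.exists_isOpen_lt_of_lt (E i) _
        (ENNReal.lt_add_right (measure_ne_top μ _) hη0.ne')
    choose V hVsub hVopen hVlt using hUex
    set W : Fin n → Set X := fun i => ⇑g ⁻¹' Set.Iio (t i) with hW
    have hWopen : ∀ i, IsOpen (W i) := fun i => isOpen_Iio.preimage g.continuous
    have hEW : ∀ i, E i ⊆ W i := by
      intro i x hx
      rw [hE] at hx
      simp only [Set.mem_preimage, Set.mem_Ioc] at hx
      rw [hW]
      simp only [Set.mem_preimage, Set.mem_Iio]
      rw [ht]
      simp only []
      linarith [hx.2]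
    set U : Fin n → Set X := fun i => V i ∩ W i with hUdef
    have hUopen : ∀ i, IsOpen (U i) := fun i => (hVopen i).inter (hWopen i)
    have hEU : ∀ i, E i ⊆ U i := fun i => Set.subset_inter (hVsub i) (hEW i)
    have hUμ : ∀ i, μ (U i) ≤ μ (E i) + η := fun i =>
      le_trans (measure_mono Set.inter_subset_left) (hVlt i).le
    have hUW : ∀ i, U i ⊆ W i := fun i => Set.inter_subset_right
    have hcov : Set.univ ⊆ ⋃ i, U i := by
      rw [← hEcover]
      exact Set.iUnion_mono hEU
    obtain ⟨p, hpsupp, hpsum, hp01, _⟩ :=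
      exists_continuous_sum_one_of_isOpen_isCompact hUopen isCompact_univ hcov
    set B : Fin n → (X →ᵇ ℝ) := fun i => BoundedContinuousFunction.mkOfCompact (p i) with hBdef
    have hB0 : ∀ i, (0 : X →ᵇ ℝ) ≤ B i := by
      intro i x
      exact (hp01 i x).1
    have hB1 : ∀ i, B i ≤ 1 := by
      intro i x
      exact (hp01 i x).2
    have hBsum : (∑ i, B i) = 1 := by
      ext x
      rw [BoundedContinuousFunction.sum_apply]
      have h1 := hpsum (Set.mem_univ x)
      simpa [hBdef] using h1
    have hgdecomp : g = ∑ i, B i * g := by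
      ext x
      rw [BoundedContinuousFunction.sum_apply]
      have h1 : ∀ i : Fin n, (B i * g) x = B i x * g x := fun i => rfl
      simp only [h1]
      rw [← Finset.sum_mul]
      have h2 : (∑ i, B i x) = 1 := by
        have := congrArg (fun q : X →ᵇ ℝ => q x) hBsum
        simpa [BoundedContinuousFunction.sum_apply] using this
      rw [h2, one_mul]
    have hellsum : ℓ g = ∑ i, ℓ (B i * g) := by
      conv_lhs => rw [hgdecomp]
      exact ell_sum ℓ hadd hsmul _
    have hstep : ∀ i, ℓ (B i * g) ≤ t i * ℓ (B i) := by
      intro i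
      have hle : (B i * g : X →ᵇ ℝ) ≤ t i • B i := by
        intro x
        show (B i * g) x ≤ (t i • B i) x
        have h1 : (B i * g) x = p i x * g x := rfl
        have h2 : (t i • B i) x = t i * p i x := rfl
        rw [h1, h2]
        rcases eq_or_lt_of_le ((hp01 i x).1) with h0 | h0
        · rw [← h0]
          simp
        · have hxsupp : x ∈ tsupport (p i) :=
            subset_closure (by simpa [Function.mem_support] using h0.ne')
          have hxW : x ∈ W i := hUW i (hpsupp i hxsupp)
          rw [hW] at hxW
          simp only [Set.mem_preimage, Set.mem_Iio] at hxW
          calc p i x * g x ≤ p i x * t i :=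
                mul_le_mul_of_nonneg_left (le_of_lt hxW) (le_of_lt h0)
            _ = t i * p i x := mul_comm _ _
      have := hmono _ _ hle
      rwa [hsmul] at this
    have hBnonneg : ∀ i, 0 ≤ ℓ (B i) := fun i => ell_nonneg ℓ hsmul hmono (hB0 i)
    have hBle : ∀ i, ℓ (B i) ≤ (μ (E i)).toReal + δ / n := by
      intro i
      have hsupp2 : tsupport (⇑(B i)) ⊆ U i := hpsupp i
      have h1 : ℓ (B i) ≤ (μ (U i)).toReal :=
        ell_le_measure_open ℓ hadd hsmul hmono hone (hUopen i) (hB0 i) (hB1 i) hsupp2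
      refine le_trans h1 ?_
      have h2 := ENNReal.toReal_mono
        (by
          apply ENNReal.add_ne_top.mpr
          exact ⟨measure_ne_top μ _, by rw [hη]; exact ENNReal.ofReal_ne_top⟩)
        (hUμ i)
      rwa [ENNReal.toReal_add (measure_ne_top μ _)
        (by rw [hη]; exact ENNReal.ofReal_ne_top), hη, ENNReal.toReal_ofReal hδn0.le] at h2
    have hsumB1 : ∑ i, ℓ (B i) = 1 := by
      rw [← ell_sum ℓ hadd hsmul, hBsum, hone]
    have hmEsum : ∑ i, (μ (E i)).toReal = 1 := by
      have h1 : (μ Set.univ) = ∑ i, μ (E i) := by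
        rw [← hEcover, measure_iUnion hEdisj hEmeas, tsum_fintype]
      have h2 : ∑ i, (μ (E i)).toReal = (∑ i, μ (E i)).toReal :=
        (ENNReal.toReal_sum fun i _ => measure_ne_top μ _).symm
      rw [h2, ← h1, measure_univ, ENNReal.toReal_one]
    have c1 : ℓ g ≤ ∑ i, t i * ℓ (B i) := by
      rw [hellsum]
      exact Finset.sum_le_sum fun i _ => hstep i
    have c2 : ∑ i, t i * ℓ (B i) = ∑ i, (t i + b) * ℓ (B i) - b := by
      have h1 : ∑ i, (t i + b) * ℓ (B i)
          = ∑ i, t i * ℓ (B i) + b * ∑ i, ℓ (B i) := by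
        rw [Finset.mul_sum, ← Finset.sum_add_distrib]
        exact Finset.sum_congr rfl fun i _ => by ring
      rw [h1, hsumB1]
      ring
    have htb0 : ∀ i, 0 ≤ t i + b := by
      intro i
      have h1 := hcmono 1 (i.val + 1) (by omega)
      have hc1 : c 1 = -b := by rw [hc]; push_cast; ring
      rw [ht]
      simp only []
      linarith
    have htble : ∀ i, t i + b ≤ 2 * b + 2 * δ := by
      intro i
      have h1 := hcmono (i.val + 1) n (Nat.succ_le_of_lt i.isLt)
      rw [ht]
      simp only []
      linarith [hcnb]
    have c3 : ∑ i, (t i + b) * ℓ (B i) ≤ ∑ i, (t i + b) * ((μ (E i)).toReal + δ / n) :=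
      Finset.sum_le_sum fun i _ => mul_le_mul_of_nonneg_left (hBle i) (htb0 i)
    have c4 : ∑ i, (t i + b) * ((μ (E i)).toReal + δ / n)
        = ∑ i, (t i + b) * (μ (E i)).toReal + ∑ i, (t i + b) * (δ / n) := by
      rw [← Finset.sum_add_distrib]
      exact Finset.sum_congr rfl fun i _ => by ring
    have c5 : ∑ i, (t i + b) * (δ / n) ≤ (2 * b + 2 * δ) * δ := by
      calc ∑ i, (t i + b) * (δ / n) ≤ ∑ _i : Fin n, (2 * b + 2 * δ) * (δ / n) :=
            Finset.sum_le_sum fun i _ => mul_le_mul_of_nonneg_right (htble i) hδn0.le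
        _ = (n : ℝ) * ((2 * b + 2 * δ) * (δ / n)) := by
            rw [Finset.sum_const, Finset.card_univ, Fintype.card_fin, nsmul_eq_mul]
        _ = (2 * b + 2 * δ) * δ := by
            field_simp
    have c6 : ∑ i, (t i + b) * (μ (E i)).toReal
        = ∑ i, t i * (μ (E i)).toReal + b := by
      have h1 : ∑ i, (t i + b) * (μ (E i)).toReal
          = ∑ i, t i * (μ (E i)).toReal + b * ∑ i, (μ (E i)).toReal := by
        rw [Finset.mul_sum, ← Finset.sum_add_distrib]
        exact Finset.sum_congr rfl fun i _ => by ring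
      rw [h1, hmEsum]
      ring
    have c7 : ∑ i, t i * (μ (E i)).toReal ≤ (∫ x, g x ∂μ) + 2 * δ := by
      have h1 : ∀ i, t i * (μ (E i)).toReal ≤ ∫ x in E i, (g x + 2 * δ) ∂μ := by
        intro i
        have hint1 : IntegrableOn (fun _ : X => t i) (E i) μ := integrableOn_const
          ((lt_of_le_of_lt (measure_mono (Set.subset_univ _)) (measure_lt_top μ _))).ne
        have hint2 : IntegrableOn (fun x => g x + 2 * δ) (E i) μ :=
          (hgint.add (integrable_const _)).integrableOn
        have hmono2 : ∫ _x in E i, t i ∂μ ≤ ∫ x in E i, (g x + 2 * δ) ∂μ := by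
          apply setIntegral_mono_on hint1 hint2 (hEmeas i)
          intro x hx
          rw [hE] at hx
          simp only [Set.mem_preimage, Set.mem_Ioc] at hx
          have hci : c i.val = c (i.val + 1) - δ := by rw [hc]; push_cast; ring
          rw [ht]
          simp only []
          linarith [hx.1]
        calc t i * (μ (E i)).toReal = ∫ _x in E i, t i ∂μ := by
              rw [setIntegral_const, smul_eq_mul, measureReal_def]
              ring
          _ ≤ _ := hmono2
      have h2 : ∑ i, ∫ x in E i, (g x + 2 * δ) ∂μ = (∫ x, g x ∂μ) + 2 * δ := by
        have hI : IntegrableOn (fun x => g x + 2 * δ) (⋃ i, E i) μ := by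
          rw [hEcover]
          exact (hgint.add (integrable_const _)).integrableOn
        have h3 := MeasureTheory.integral_iUnion hEmeas hEdisj hI
        rw [hEcover, tsum_fintype] at h3
        rw [← h3, MeasureTheory.setIntegral_univ,
          integral_add hgint (integrable_const _), integral_const, measureReal_def, measure_univ,
          ENNReal.toReal_one, one_smul]
      calc ∑ i, t i * (μ (E i)).toReal ≤ ∑ i, ∫ x in E i, (g x + 2 * δ) ∂μ :=
            Finset.sum_le_sum fun i _ => h1 i
        _ = _ := h2
    have hδ2 : δ * δ ≤ δ := by nlinarith
    have hchain : ℓ g ≤ (∫ x, g x ∂μ) + 2 * δ + (2 * b + 2 * δ) * δ := by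
      linarith [c1, c2, c3, c4, c5, c6, c7]
    nlinarith [hchain, hδ2, hb0, hδ0]
  -- conclude from the estimate
  refine le_of_forall_pos_le_add ?_
  intro ε hε
  have hC : (0:ℝ) < 2 * b + 4 := by linarith
  set δ : ℝ := min 1 (ε / (2 * b + 4)) with hδ
  have hδ0 : 0 < δ := lt_min one_pos (by positivity)
  have hδ1 : δ ≤ 1 := min_le_left _ _
  have h1 := key δ hδ0 hδ1
  have h2 : δ * (2 * b + 4) ≤ ε := by
    have := min_le_right 1 (ε / (2 * b + 4))
    calc δ * (2 * b + 4) ≤ ε / (2 * b + 4) * (2 * b + 4) :=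
          mul_le_mul_of_nonneg_right this hC.le
      _ = ε := by field_simp
  linarith

/-- The Riesz representation: `∫ g dμ = ℓ g`. -/
theorem integral_rieszMeasure (g : X →ᵇ ℝ) :
    ∫ x, g x ∂(rieszMeasure ℓ hadd hsmul hmono) = ℓ g := by
  refine le_antisymm ?_ (ell_le_integral ℓ hadd hsmul hmono hone g)
  have h := ell_le_integral ℓ hadd hsmul hmono hone (-g)
  rw [ell_neg ℓ hsmul] at h
  haveI := rieszMeasure_isFiniteMeasure ℓ hadd hsmul hmono hone
  have hint : Integrable (fun x => g x) (rieszMeasure ℓ hadd hsmul hmono) :=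
    g.integrable _
  rw [show (fun x => (-g) x) = fun x => -(g x) from rfl] at h
  rw [integral_neg] at h
  linarith

end RMKaux

/-- Abstract Riesz representation existence result on a compact metric space. -/
theorem exists_measure_of_functional
    (hadd : ∀ f g : X →ᵇ ℝ, ℓ (f + g) = ℓ f + ℓ g)
    (hsmul : ∀ (c : ℝ) (f : X →ᵇ ℝ), ℓ (c • f) = c * ℓ f)
    (hmono : ∀ f g : X →ᵇ ℝ, f ≤ g → ℓ f ≤ ℓ g)
    (hone : ℓ 1 = 1) :
    ∃ μ : Measure X, IsProbabilityMeasure μ ∧ ∀ g : X →ᵇ ℝ, ∫ x, g x ∂μ = ℓ g := by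
  refine ⟨RMKaux.rieszMeasure ℓ hadd hsmul hmono,
    ⟨RMKaux.rieszMeasure_univ ℓ hadd hsmul hmono hone⟩,
    fun g => RMKaux.integral_rieszMeasure ℓ hadd hsmul hmono hone g⟩

end RMK

/-- If `∫ f dμ > 0` for every flow-invariant Borel probability measure, then
there are `T > 0` and `c > 0` with `∫₀ᵀ f(φ_s x) ds ≥ c T`. -/
theorem uniform_positive_birkhoff_integral
    {X : Type*} [MetricSpace X] [CompactSpace X]
    [MeasurableSpace X] [BorelSpace X]
    (φ : ℝ → X → X)
    (hφc : Continuous fun p : ℝ × X => φ p.1 p.2)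
    (hφ0 : ∀ x, φ 0 x = x)
    (hφadd : ∀ s t x, φ (s + t) x = φ s (φ t x))
    (f : X → ℝ) (hf : Continuous f)
    (hpos : ∀ μ : Measure X, IsProbabilityMeasure μ →
      (∀ t : ℝ, Measure.map (φ t) μ = μ) → 0 < ∫ x, f x ∂μ) :
    ∃ T c : ℝ, 0 < T ∧ 0 < c ∧
      ∀ x : X, c * T ≤ ∫ s in (0:ℝ)..T, f (φ s x) := by
  classical
  by_contra hcon
  push_neg at hcon
  -- continuity helpers
  have hφt : ∀ t : ℝ, Continuous (φ t) := fun t =>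
    hφc.comp (continuous_const.prodMk continuous_id)
  have horb : ∀ (x : X) (g : X → ℝ), Continuous g → Continuous fun s : ℝ => g (φ s x) :=
    fun x g hg => hg.comp (hφc.comp (continuous_id.prodMk continuous_const))
  -- bad points
  have hbad : ∀ n : ℕ, ∃ x : X, ∫ s in (0:ℝ)..((n:ℝ)+1), f (φ s x) < ((n:ℝ)+1)⁻¹ := by
    intro n
    have hT : (0:ℝ) < (n:ℝ)+1 := by positivity
    have hc : (0:ℝ) < (((n:ℝ)+1)^2)⁻¹ := by positivity
    obtain ⟨x, hx⟩ := hcon ((n:ℝ)+1) ((((n:ℝ)+1)^2)⁻¹) hT hc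
    refine ⟨x, ?_⟩
    have : (((n:ℝ)+1)^2)⁻¹ * ((n:ℝ)+1) = ((n:ℝ)+1)⁻¹ := by
      field_simp
    rwa [this] at hx
  choose xs hxs using hbad
  -- the averaging functionals
  set A : ℕ → (X →ᵇ ℝ) → ℝ :=
    fun n g => (((n:ℝ)+1))⁻¹ * ∫ s in (0:ℝ)..((n:ℝ)+1), g (φ s (xs n)) with hA
  have hIntg : ∀ (g : X →ᵇ ℝ) (x : X) (a b : ℝ),
      IntervalIntegrable (fun s => g (φ s x)) MeasureTheory.volume a b :=
    fun g x a b => (horb x g g.continuous).intervalIntegrable a b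
  have hAbound : ∀ (n : ℕ) (g : X →ᵇ ℝ), |A n g| ≤ ‖g‖ := by
    intro n g
    have hpos' : (0:ℝ) < (n:ℝ)+1 := by positivity
    have h1 : ‖∫ s in (0:ℝ)..((n:ℝ)+1), g (φ s (xs n))‖ ≤ ‖g‖ * |((n:ℝ)+1) - 0| := by
      apply intervalIntegral.norm_integral_le_of_norm_le_const
      intro s _
      exact g.norm_coe_le_norm _
    rw [hA]
    rw [abs_mul, abs_inv]
    have h2 : |(n:ℝ)+1| = (n:ℝ)+1 := abs_of_pos hpos'
    rw [h2]
    have h3 : |∫ s in (0:ℝ)..((n:ℝ)+1), g (φ s (xs n))| ≤ ‖g‖ * ((n:ℝ)+1) := by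
      simpa [abs_of_pos hpos'] using h1
    calc ((n:ℝ)+1)⁻¹ * |∫ s in (0:ℝ)..((n:ℝ)+1), g (φ s (xs n))|
        ≤ ((n:ℝ)+1)⁻¹ * (‖g‖ * ((n:ℝ)+1)) := by
          exact mul_le_mul_of_nonneg_left h3 (by positivity)
      _ = ‖g‖ := by field_simp
  -- an ultrafilter extending atTop
  obtain ⟨U, hU⟩ := (Filter.atTop : Filter ℕ).exists_ultrafilter_le
  -- the limit functional
  have hlim : ∀ g : X →ᵇ ℝ, ∃ L : ℝ, Filter.Tendsto (fun n => A n g) (U : Filter ℕ) (𝓝 L) := by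
    intro g
    have hmem : (↑(U.map fun n => A n g) : Filter ℝ) ≤ Filter.principal (Set.Icc (-‖g‖) ‖g‖) := by
      rw [Filter.le_principal_iff]
      rw [Ultrafilter.coe_map, Filter.mem_map]
      apply Filter.univ_mem'
      intro n
      have := hAbound n g
      rw [abs_le] at this
      exact ⟨this.1, this.2⟩
    obtain ⟨L, _, hL⟩ := isCompact_Icc.ultrafilter_le_nhds (U.map fun n => A n g) hmem
    refine ⟨L, ?_⟩
    rwa [Filter.Tendsto, ← Ultrafilter.coe_map]
  choose ℓ hℓ using hlim
  -- linearity etc of the functional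
  have hadd : ∀ g h : X →ᵇ ℝ, ℓ (g + h) = ℓ g + ℓ h := by
    intro g h
    have h2 : (fun n => A n (g + h)) = fun n => A n g + A n h := by
      funext n
      rw [hA]
      simp only []
      rw [show (∫ s in (0:ℝ)..((n:ℝ)+1), (g + h) (φ s (xs n)))
          = (∫ s in (0:ℝ)..((n:ℝ)+1), (g (φ s (xs n)) + h (φ s (xs n)))) from rfl]
      rw [intervalIntegral.integral_add (hIntg g _ _ _) (hIntg h _ _ _)]
      ring
    refine tendsto_nhds_unique (hℓ (g + h)) ?_
    rw [h2]
    exact ((hℓ g).add (hℓ h))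
  have hsmul : ∀ (c : ℝ) (g : X →ᵇ ℝ), ℓ (c • g) = c * ℓ g := by
    intro c g
    have h2 : (fun n => A n (c • g)) = fun n => c * A n g := by
      funext n
      rw [hA]
      simp only []
      rw [show (∫ s in (0:ℝ)..((n:ℝ)+1), (c • g) (φ s (xs n)))
          = (∫ s in (0:ℝ)..((n:ℝ)+1), c * (g (φ s (xs n)))) from rfl]
      rw [intervalIntegral.integral_const_mul]
      ring
    refine tendsto_nhds_unique (hℓ (c • g)) ?_
    rw [h2]
    exact (hℓ g).const_mul c
  have hmono : ∀ g h : X →ᵇ ℝ, g ≤ h → ℓ g ≤ ℓ h := by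
    intro g h hgh
    refine le_of_tendsto_of_tendsto' (hℓ g) (hℓ h) ?_
    intro n
    rw [hA]
    simp only []
    apply mul_le_mul_of_nonneg_left _ (by positivity)
    apply intervalIntegral.integral_mono_on (by positivity) (hIntg g _ _ _) (hIntg h _ _ _)
    intro s _
    exact hgh _
  have hone : ℓ 1 = 1 := by
    have h2 : (fun n => A n 1) = fun _ => (1:ℝ) := by
      funext n
      rw [hA]
      simp only []
      rw [show (∫ s in (0:ℝ)..((n:ℝ)+1), (1 : X →ᵇ ℝ) (φ s (xs n)))
          = (∫ s in (0:ℝ)..((n:ℝ)+1), (1:ℝ)) from rfl]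
      rw [intervalIntegral.integral_const]
      have : ((n:ℝ)+1) ≠ 0 := by positivity
      rw [sub_zero, smul_eq_mul, mul_one]
      field_simp
    refine tendsto_nhds_unique (hℓ 1) ?_
    rw [h2]
    exact tendsto_const_nhds
  -- invariance of the functional
  have hinv : ∀ (t : ℝ) (g : X →ᵇ ℝ),
      ℓ (g.compContinuous ⟨φ t, hφt t⟩) = ℓ g := by
    intro t g
    set gt : X →ᵇ ℝ := g.compContinuous ⟨φ t, hφt t⟩ with hgt
    -- difference tends to zero
    have hdiff : Filter.Tendsto (fun n => A n gt - A n g) (U : Filter ℕ) (𝓝 0) := by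
      refine squeeze_zero_norm (f := fun n => A n gt - A n g) (a := fun n => ((n:ℝ)+1)⁻¹ * (2 * |t| * ‖g‖)) ?_ ?_
      · intro n
        set T : ℝ := (n:ℝ)+1 with hT
        set x : X := xs n with hx
        set G : ℝ → ℝ := fun s => g (φ s x) with hG
        have hGc : Continuous G := horb x g g.continuous
        have hGI : ∀ a b : ℝ, IntervalIntegrable G MeasureTheory.volume a b :=
          fun a b => hGc.intervalIntegrable a b
        have hTpos : (0:ℝ) < T := by rw [hT]; positivity
        have e1 : (∫ s in (0:ℝ)..T, gt (φ s x)) = ∫ s in (0:ℝ)..T, G (s + t) := by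
          apply intervalIntegral.integral_congr
          intro s _
          rw [hgt]
          show g (φ t (φ s x)) = G (s + t)
          rw [hG]
          show g (φ t (φ s x)) = g (φ (s + t) x)
          rw [add_comm, hφadd t s x]
        have e2 : (∫ s in (0:ℝ)..T, G (s + t)) = ∫ s in t..(T + t), G s := by
          simpa using intervalIntegral.integral_comp_add_right G t
        have e3 : (∫ s in t..(T + t), G s) - (∫ s in (0:ℝ)..T, G s)
            = (∫ s in T..(T + t), G s) - (∫ s in (0:ℝ)..t, G s) := by
          have p1 : (∫ s in (0:ℝ)..t, G s) + (∫ s in t..(T + t), G s)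
              = ∫ s in (0:ℝ)..(T + t), G s :=
            intervalIntegral.integral_add_adjacent_intervals (hGI _ _) (hGI _ _)
          have p2 : (∫ s in (0:ℝ)..T, G s) + (∫ s in T..(T + t), G s)
              = ∫ s in (0:ℝ)..(T + t), G s :=
            intervalIntegral.integral_add_adjacent_intervals (hGI _ _) (hGI _ _)
          linarith
        have hb1 : ‖∫ s in T..(T + t), G s‖ ≤ ‖g‖ * |t| := by
          have := intervalIntegral.norm_integral_le_of_norm_le_const
            (C := ‖g‖) (f := G) (a := T) (b := T + t)
            (fun s _ => g.norm_coe_le_norm _)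
          simpa using this
        have hb2 : ‖∫ s in (0:ℝ)..t, G s‖ ≤ ‖g‖ * |t| := by
          have := intervalIntegral.norm_integral_le_of_norm_le_const
            (C := ‖g‖) (f := G) (a := 0) (b := t)
            (fun s _ => g.norm_coe_le_norm _)
          simpa using this
        have hAgt : A n gt = T⁻¹ * ∫ s in t..(T + t), G s := by
          rw [hA]
          simp only []
          rw [← hT, ← hx, e1, e2]
        have hAg : A n g = T⁻¹ * ∫ s in (0:ℝ)..T, G s := by
          rw [hA]
        have key : ‖A n gt - A n g‖ ≤ T⁻¹ * (2 * |t| * ‖g‖) := by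
          rw [hAgt, hAg, ← mul_sub, e3, norm_mul]
          have h4 : ‖(∫ s in T..(T + t), G s) - ∫ s in (0:ℝ)..t, G s‖ ≤ 2 * |t| * ‖g‖ := by
            calc ‖(∫ s in T..(T + t), G s) - ∫ s in (0:ℝ)..t, G s‖
                ≤ ‖∫ s in T..(T + t), G s‖ + ‖∫ s in (0:ℝ)..t, G s‖ := norm_sub_le _ _
              _ ≤ ‖g‖ * |t| + ‖g‖ * |t| := add_le_add hb1 hb2
              _ = 2 * |t| * ‖g‖ := by ring
          have h5 : ‖T⁻¹‖ = T⁻¹ := by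
            rw [Real.norm_eq_abs, abs_of_pos (by positivity)]
          rw [h5]
          exact mul_le_mul_of_nonneg_left h4 (by positivity)
        exact key
      · have hb : Filter.Tendsto (fun n : ℕ => ((n:ℝ)+1)⁻¹ * (2 * |t| * ‖g‖))
            Filter.atTop (𝓝 0) := by
          have h0 : Filter.Tendsto (fun n : ℕ => ((n:ℝ)+1)⁻¹) Filter.atTop (𝓝 0) := by
            simpa using tendsto_one_div_add_atTop_nhds_zero_nat (𝕜 := ℝ)
          simpa using h0.mul_const (2 * |t| * ‖g‖)
        exact hb.mono_left hU
    have h2 : Filter.Tendsto (fun n => A n gt) (U : Filter ℕ) (𝓝 (ℓ g)) := by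
      have := hdiff.add (hℓ g)
      simpa using this
    exact tendsto_nhds_unique (hℓ gt) h2
  -- the measure
  obtain ⟨μ, hμprob, hμint⟩ := exists_measure_of_functional ℓ hadd hsmul hmono hone
  haveI := hμprob
  -- invariance of the measure
  have hinvμ : ∀ t : ℝ, Measure.map (φ t) μ = μ := by
    intro t
    symm
    apply MeasureTheory.ext_of_forall_lintegral_eq_of_IsFiniteMeasure
    intro gnn
    have hgnnc : Continuous fun x => (gnn x : ℝ) := NNReal.continuous_coe.comp gnn.continuous
    set gR : X →ᵇ ℝ := BoundedContinuousFunction.mkOfCompact ⟨fun x => (gnn x : ℝ), hgnnc⟩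
      with hgR
    have hmapint : ∫⁻ x, (gnn x : ℝ≥0∞) ∂(Measure.map (φ t) μ)
        = ∫⁻ x, (gnn (φ t x) : ℝ≥0∞) ∂μ := by
      apply MeasureTheory.lintegral_map
      · exact (ENNReal.continuous_coe.comp gnn.continuous).measurable
      · exact (hφt t).measurable
    have hint1 : MeasureTheory.Integrable (fun x => (gnn x : ℝ)) μ := gR.integrable μ
    have hint2 : MeasureTheory.Integrable (fun x => (gnn (φ t x) : ℝ)) μ :=
      (gR.compContinuous ⟨φ t, hφt t⟩).integrable μ
    have e1 : ∫⁻ x, (gnn x : ℝ≥0∞) ∂μ = ENNReal.ofReal (∫ x, (gnn x : ℝ) ∂μ) :=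
      MeasureTheory.lintegral_coe_eq_integral _ hint1
    have e2 : ∫⁻ x, (gnn (φ t x) : ℝ≥0∞) ∂μ
        = ENNReal.ofReal (∫ x, (gnn (φ t x) : ℝ) ∂μ) :=
      MeasureTheory.lintegral_coe_eq_integral (fun x => gnn (φ t x)) hint2
    rw [hmapint, e1, e2]
    congr 1
    have r1 : ∫ x, (gnn x : ℝ) ∂μ = ℓ gR := hμint gR
    have r2 : ∫ x, (gnn (φ t x) : ℝ) ∂μ = ℓ (gR.compContinuous ⟨φ t, hφt t⟩) :=
      hμint (gR.compContinuous ⟨φ t, hφt t⟩)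
    rw [r1, r2, hinv t gR]
  -- contradiction
  have hposint := hpos μ hμprob hinvμ
  set fB : X →ᵇ ℝ := BoundedContinuousFunction.mkOfCompact ⟨f, hf⟩ with hfB
  have hfeq : ∫ x, f x ∂μ = ℓ fB := hμint fB
  have hfle : ℓ fB ≤ 0 := by
    have hb : Filter.Tendsto (fun n : ℕ => ((n:ℝ)+1)⁻¹ * ((n:ℝ)+1)⁻¹)
        Filter.atTop (𝓝 0) := by
      have h0 : Filter.Tendsto (fun n : ℕ => ((n:ℝ)+1)⁻¹) Filter.atTop (𝓝 0) := by
        simpa using tendsto_one_div_add_atTop_nhds_zero_nat (𝕜 := ℝ)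
      simpa using h0.mul h0
    have hle : ∀ n, A n fB ≤ ((n:ℝ)+1)⁻¹ * ((n:ℝ)+1)⁻¹ := by
      intro n
      rw [hA]
      simp only []
      have := hxs n
      have h2 : (∫ s in (0:ℝ)..((n:ℝ)+1), fB (φ s (xs n)))
          = ∫ s in (0:ℝ)..((n:ℝ)+1), f (φ s (xs n)) := rfl
      rw [h2]
      apply mul_le_mul_of_nonneg_left (le_of_lt this) (by positivity)
    have := le_of_tendsto_of_tendsto' (hℓ fB) (hb.mono_left hU) hle
    simpa using this
  rw [hfeq] at hposint
  linarith
end
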